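/- Let A ∈ ℂ^{n×n}, B ∈ ℂ^{n×m}, C ∈ ℂ^{p×n}, and let q = s + p. Let V ∈ ℂ^{n×q} satisfy VᴴV = I_q, let K, H ∈ ℂ^{q×s} satisfy AᴴVK = VH, and let C̃ ∈ ℂ^{q×p} satisfy Cᴴ = VC̃. Let L ∈ ℂ^{q×s} be such that LᴴK is invertible, set π := K(LᴴK)⁻¹Lᴴ, π̃ := I − π. Let Y ∈ ℂ^{s×s} be Hermitian, X := V K Y Kᴴ Vᴴ, S := Kᴴ Vᴴ B Bᴴ V K, and suppose π (H Y Kᴴ + K Y Hᴴ + C̃C̃ᴴ − K Y S Y Kᴴ) πᴴ = 0. Let U, W ∈ ℂ^{q×p} have full column rank with LᴴU = 0 and KᴴW = 0, and set Υ := K Y Hᴴ + (I − (1/2)π̃) C̃C̃ᴴ and T := Υ W (UᴴW)⁻¹ ∈ ℂ^{q×p}. Let Q ∈ ℂ^{q×2p} with QᴴQ = I_{2p} and R ∈ ℂ^{2p×2p} be such that the block matrix [U T] (horizontal concatenation) equals QR. Then ‖R(X)‖_F = ‖R J Rᴴ‖_F, where J ∈ ℂ^{2p×2p} is the block matrix with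 zero p×p diagonal blocks and identity p×p off-diagonal blocks, J = fromBlocks 0 I_p I_p 0. -/

import Mathlib

open Matrix

/-- The Riccati residual `R(X) = AᴴX + XA + CᴴC − XBBᴴX`. -/
noncomputable def riccatiResidual {n m p : ℕ} (A : Matrix (Fin n) (Fin n) ℂ)
    (B : Matrix (Fin n) (Fin m) ℂ) (C : Matrix (Fin p) (Fin n) ℂ)
    (X : Matrix (Fin n) (Fin n) ℂ) : Matrix (Fin n) (Fin n) ℂ :=
  Aᴴ * X + X * A + Cᴴ * C - X * B * Bᴴ * X

/-- The Frobenius norm of a complex matrix. -/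
noncomputable def frobNorm {a b : Type*} [Fintype a] [Fintype b]
    (M : Matrix a b ℂ) : ℝ :=
  Real.sqrt (∑ i, ∑ j, ‖M i j‖ ^ 2)

lemma frob_eq_trace {a b : Type*} [Fintype a] [Fintype b] (M : Matrix a b ℂ) :
    frobNorm M = Real.sqrt ((Matrix.trace (Mᴴ * M)).re) := by
  unfold frobNorm
  congr 1
  rw [Matrix.trace]
  simp only [Matrix.diag_apply, Matrix.mul_apply, Matrix.conjTranspose_apply]
  rw [Complex.re_sum]
  rw [Finset.sum_comm]
  congr 1; ext i; rw [Complex.re_sum]; congr 1; ext j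
  rw [Complex.sq_norm, Complex.normSq_apply, Complex.mul_re]
  simp

lemma frob_unitary_conj {r c : Type*} [Fintype r] [Fintype c] [DecidableEq c]
    (V : Matrix r c ℂ) (hV : Vᴴ * V = 1) (N : Matrix c c ℂ) :
    frobNorm (V * N * Vᴴ) = frobNorm N := by
  rw [frob_eq_trace, frob_eq_trace]
  congr 3
  calc Matrix.trace ((V * N * Vᴴ)ᴴ * (V * N * Vᴴ))
      = Matrix.trace (V * (Nᴴ * ((Vᴴ * V) * (N * Vᴴ)))) := by
        simp only [conjTranspose_mul, conjTranspose_conjTranspose, Matrix.mul_assoc]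
    _ = Matrix.trace (Nᴴ * (N * (Vᴴ * V))) := by
        rw [hV, Matrix.one_mul, Matrix.trace_mul_comm]
        simp only [Matrix.mul_assoc]
        rw [hV]
    _ = Matrix.trace (Nᴴ * N) := by rw [hV, Matrix.mul_one]

lemma isUnit_ct {q : Type*} [Fintype q] [DecidableEq q] {A : Matrix q q ℂ}
    (h : IsUnit A) : IsUnit Aᴴ := by
  rw [Matrix.isUnit_iff_isUnit_det, Matrix.det_conjTranspose, isUnit_star,
    ← Matrix.isUnit_iff_isUnit_det]
  exact h

/-- Invertibility of the reindexed `[P R]` given a left annihilator structure. -/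
lemma key_unit {p s : ℕ}
    (P : Matrix (Fin (s+p)) (Fin s) ℂ) (R : Matrix (Fin (s+p)) (Fin p) ℂ)
    (Z : Matrix (Fin (s+p)) (Fin s) ℂ) (hZP : IsUnit (Zᴴ * P)) (hZR : Zᴴ * R = 0)
    (hRinj : ∀ x : Fin p → ℂ, R.mulVec x = 0 → x = 0) :
    IsUnit ((fromCols P R).submatrix (Equiv.refl (Fin (s+p)))
      ⇑(finSumFinEquiv (m := s) (n := p)).symm) := by
  set e : (Fin s ⊕ Fin p) ≃ Fin (s + p) := finSumFinEquiv with he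
  rw [← Matrix.mulVec_injective_iff_isUnit]
  have hPinj := Matrix.mulVec_injective_iff_isUnit.mpr hZP
  intro v w hvw
  have hdiff : (fromCols P R).submatrix (Equiv.refl (Fin (s+p))) ⇑e.symm *ᵥ (v - w) = 0 := by
    rw [Matrix.mulVec_sub, hvw, sub_self]
  rw [Matrix.submatrix_mulVec_equiv] at hdiff
  have h1 : fromCols P R *ᵥ ((v - w) ∘ ⇑e) = 0 := by
    funext i
    have := congrFun hdiff i
    simpa [Equiv.symm_symm] using this
  rw [← Sum.elim_comp_inl_inr ((v - w) ∘ ⇑e), fromCols_mulVec_sumElim] at h1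
  set a := ((v - w) ∘ ⇑e) ∘ Sum.inl
  set b := ((v - w) ∘ ⇑e) ∘ Sum.inr
  have h2 : Zᴴ *ᵥ (P *ᵥ a + R *ᵥ b) = 0 := by rw [h1, Matrix.mulVec_zero]
  rw [Matrix.mulVec_add, Matrix.mulVec_mulVec, Matrix.mulVec_mulVec, hZR,
    Matrix.zero_mulVec, add_zero] at h2
  have ha : a = 0 := by
    apply hPinj
    rw [h2, Matrix.mulVec_zero]
  have hb : b = 0 := by
    apply hRinj
    have : P *ᵥ a = 0 := by rw [ha, Matrix.mulVec_zero]
    rw [this, zero_add] at h1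
    exact h1
  have hvw0 : v - w = 0 := by
    funext i
    have : (v - w) (e (e.symm i)) = 0 := by
      rcases hsum : e.symm i with x | y
      · have := congrFun ha x
        simpa [a, hsum] using this
      · have := congrFun hb y
        simpa [b, hsum] using this
    simpa using this
  exact sub_eq_zero.mp hvw0

/-- `‖R(X)‖_F = ‖R J Rᴴ‖_F` with the economy-size QR
decomposition `[U T] = QR` and `J = fromBlocks 0 I I 0`. -/
theorem stmt_7 {n m p s : ℕ}
    (A : Matrix (Fin n) (Fin n) ℂ) (B : Matrix (Fin n) (Fin m) ℂ)
    (C : Matrix (Fin p) (Fin n) ℂ)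
    (V : Matrix (Fin n) (Fin (s + p)) ℂ) (hV : Vᴴ * V = 1)
    (K H : Matrix (Fin (s + p)) (Fin s) ℂ) (hKH : Aᴴ * V * K = V * H)
    (Ct : Matrix (Fin (s + p)) (Fin p) ℂ) (hCt : Cᴴ = V * Ct)
    (L : Matrix (Fin (s + p)) (Fin s) ℂ) (hLK : IsUnit (Lᴴ * K))
    (pr : Matrix (Fin (s + p)) (Fin (s + p)) ℂ)
    (hpr : pr = K * (Lᴴ * K)⁻¹ * Lᴴ)
    (pt : Matrix (Fin (s + p)) (Fin (s + p)) ℂ) (hpt : pt = 1 - pr)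
    (Y : Matrix (Fin s) (Fin s) ℂ) (hY : Yᴴ = Y)
    (X : Matrix (Fin n) (Fin n) ℂ) (hX : X = V * K * Y * Kᴴ * Vᴴ)
    (S : Matrix (Fin s) (Fin s) ℂ) (hS : S = Kᴴ * Vᴴ * B * Bᴴ * V * K)
    (hproj : pr * (H * Y * Kᴴ + K * Y * Hᴴ + Ct * Ctᴴ - K * Y * S * Y * Kᴴ)
        * prᴴ = 0)
    (U W : Matrix (Fin (s + p)) (Fin p) ℂ)
    (hU : ∀ x : Fin p → ℂ, U.mulVec x = 0 → x = 0)
    (hW : ∀ x : Fin p → ℂ, W.mulVec x = 0 → x = 0)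
    (hLU : Lᴴ * U = 0) (hKW : Kᴴ * W = 0)
    (Ups : Matrix (Fin (s + p)) (Fin (s + p)) ℂ)
    (hUps : Ups = K * Y * Hᴴ + (1 - (1/2 : ℂ) • pt) * (Ct * Ctᴴ))
    (T : Matrix (Fin (s + p)) (Fin p) ℂ) (hT : T = Ups * W * (Uᴴ * W)⁻¹)
    (Q : Matrix (Fin (s + p)) (Fin p ⊕ Fin p) ℂ) (hQ : Qᴴ * Q = 1)
    (R : Matrix (Fin p ⊕ Fin p) (Fin p ⊕ Fin p) ℂ)
    (hQR : Matrix.fromCols U T = Q * R) :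
    frobNorm (riccatiResidual A B C X) =
      frobNorm (R * Matrix.fromBlocks 0 1 1 0 * Rᴴ) := by
  -- basic projector facts
  have hdet : IsUnit (Lᴴ * K).det := (Matrix.isUnit_iff_isUnit_det _).mp hLK
  have hinv : (Lᴴ * K)⁻¹ * (Lᴴ * K) = 1 := Matrix.nonsing_inv_mul _ hdet
  have hprK : pr * K = K := by
    rw [hpr]
    calc K * (Lᴴ * K)⁻¹ * Lᴴ * K = K * ((Lᴴ * K)⁻¹ * (Lᴴ * K)) := by
          simp only [Matrix.mul_assoc]
      _ = K := by rw [hinv, Matrix.mul_one]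
  have hprU : pr * U = 0 := by
    rw [hpr]
    calc K * (Lᴴ * K)⁻¹ * Lᴴ * U = K * ((Lᴴ * K)⁻¹ * (Lᴴ * U)) := by
          simp only [Matrix.mul_assoc]
      _ = 0 := by rw [hLU, Matrix.mul_zero, Matrix.mul_zero]
  have hptK : pt * K = 0 := by rw [hpt, Matrix.sub_mul, Matrix.one_mul, hprK, sub_self]
  have hptU : pt * U = U := by rw [hpt, Matrix.sub_mul, Matrix.one_mul, hprU, sub_zero]
  have hKpt : Kᴴ * ptᴴ = 0 := by
    have := congrArg conjTranspose hptK
    simpa only [conjTranspose_mul, conjTranspose_zero] using this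
  have hUpt : Uᴴ * ptᴴ = Uᴴ := by
    have := congrArg conjTranspose hptU
    simpa only [conjTranspose_mul] using this
  -- Step 1 : the residual equals V M Vᴴ
  set M : Matrix (Fin (s + p)) (Fin (s + p)) ℂ :=
    H * Y * Kᴴ + K * Y * Hᴴ + Ct * Ctᴴ - K * Y * S * Y * Kᴴ with hM
  have hres : riccatiResidual A B C X = V * M * Vᴴ := by
    have lemA : ∀ (Z : Matrix (Fin s) (Fin n) ℂ), Aᴴ * (V * (K * Z)) = V * (H * Z) := by
      intro Z
      calc Aᴴ * (V * (K * Z)) = (Aᴴ * V * K) * Z := by simp only [Matrix.mul_assoc]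
        _ = V * (H * Z) := by rw [hKH, Matrix.mul_assoc]
    have lemB : Kᴴ * (Vᴴ * A) = Hᴴ * Vᴴ := by
      have := congrArg conjTranspose hKH
      simp only [conjTranspose_mul, conjTranspose_conjTranspose, Matrix.mul_assoc] at this
      exact this
    have hC : C = Ctᴴ * Vᴴ := by
      have := congrArg conjTranspose hCt
      simp only [conjTranspose_mul, conjTranspose_conjTranspose] at this
      exact this
    rw [riccatiResidual, hM, hX, hS, hCt, hC]
    simp only [Matrix.mul_add, Matrix.add_mul, Matrix.mul_sub, Matrix.sub_mul, Matrix.mul_assoc]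
    rw [lemA, lemB]
  -- Step 2 : M = Ups ptᴴ + pt Upsᴴ
  have hMdecomp : M = Ups * ptᴴ + pt * Upsᴴ := by
    have hptK' : ∀ (Z : Matrix (Fin s) (Fin (s+p)) ℂ), pt * (K * Z) = 0 := by
      intro Z; rw [← Matrix.mul_assoc, hptK, Matrix.zero_mul]
    have hA : M * ptᴴ = K * Y * (Hᴴ * ptᴴ) + Ct * (Ctᴴ * ptᴴ) := by
      rw [hM]
      simp only [Matrix.add_mul, Matrix.sub_mul, Matrix.mul_assoc, hKpt,
        Matrix.mul_zero, sub_zero]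
      abel
    have hB : pt * (M * prᴴ) = pt * (H * (Y * (Kᴴ * prᴴ))) + pt * (Ct * (Ctᴴ * prᴴ)) := by
      rw [hM]
      simp only [Matrix.add_mul, Matrix.sub_mul, Matrix.mul_add, Matrix.mul_sub,
        Matrix.mul_assoc, hptK', sub_zero]
      abel
    have hsplit : M = M * ptᴴ + pt * (M * prᴴ) := by
      have h1 : prᴴ + ptᴴ = 1 := by
        rw [hpt]; simp [conjTranspose_sub, conjTranspose_one]
      have h2 : pr + pt = 1 := by rw [hpt]; abel
      have h0 : pr * (M * prᴴ) = 0 := by rw [← Matrix.mul_assoc]; exact hproj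
      calc M = M * (prᴴ + ptᴴ) := by rw [h1, Matrix.mul_one]
        _ = M * prᴴ + M * ptᴴ := by rw [Matrix.mul_add]
        _ = (pr + pt) * (M * prᴴ) + M * ptᴴ := by rw [h2, Matrix.one_mul]
        _ = M * ptᴴ + pt * (M * prᴴ) := by rw [Matrix.add_mul, h0, zero_add]; abel
    rw [hsplit, hA, hB, hUps]
    have hprpt : prᴴ = 1 - ptᴴ := by
      rw [hpt]; simp [conjTranspose_sub, conjTranspose_one]
    have hUpsH : ((1 : Matrix (Fin (s+p)) (Fin (s+p)) ℂ) - (1/2 : ℂ) • pt)ᴴ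
        = 1 - (1/2 : ℂ) • ptᴴ := by
      simp [conjTranspose_sub, conjTranspose_smul]
    rw [hprpt]
    simp only [conjTranspose_add, conjTranspose_sub, conjTranspose_smul, conjTranspose_mul,
      conjTranspose_conjTranspose, conjTranspose_one,
      hUpsH, hY, Matrix.mul_add, Matrix.add_mul, Matrix.mul_sub, Matrix.sub_mul,
      Matrix.mul_one, Matrix.one_mul, Matrix.smul_mul, Matrix.mul_smul, Matrix.mul_assoc,
      hptK', hKpt, Matrix.mul_zero, smul_zero, sub_zero, star_div₀, star_one, star_ofNat]
    module
  -- Step 3 : IsUnit (Uᴴ W) and ptᴴ = W (UᴴW)⁻¹ Uᴴ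
  have hKL : IsUnit (Kᴴ * L) := by
    have := isUnit_ct hLK
    simpa [conjTranspose_mul] using this
  set e : (Fin s ⊕ Fin p) ≃ Fin (s + p) := finSumFinEquiv with he
  have hGsq := key_unit K U L hLK hLU hU
  have hFsq := key_unit L W K hKL hKW hW
  set Gsq := (fromCols K U).submatrix (Equiv.refl (Fin (s+p))) ⇑e.symm with hGsqdef
  set Fsq := (fromCols L W).submatrix (Equiv.refl (Fin (s+p))) ⇑e.symm with hFsqdef
  have hFG : Fsqᴴ * Gsq =
      (fromBlocks (Lᴴ * K) 0 (Wᴴ * K) (Wᴴ * U)).submatrix ⇑e.symm ⇑e.symm := by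
    rw [hFsqdef, hGsqdef, conjTranspose_submatrix]
    rw [show ((fromCols L W)ᴴ.submatrix (⇑e.symm) ⇑(Equiv.refl (Fin (s+p)))) *
        ((fromCols K U).submatrix (⇑(Equiv.refl (Fin (s+p)))) ⇑e.symm) =
        ((fromCols L W)ᴴ * fromCols K U).submatrix (⇑e.symm) ⇑e.symm from
      Matrix.submatrix_mul_equiv _ _ _ (Equiv.refl _) _]
    rw [conjTranspose_fromCols_eq_fromRows_conjTranspose, fromRows_mul_fromCols, hLU]
  have hFGunit : IsUnit (fromBlocks (Lᴴ * K) (0 : Matrix (Fin s) (Fin p) ℂ)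
      (Wᴴ * K) (Wᴴ * U)) := by
    have h1 : IsUnit (Fsqᴴ * Gsq) := (isUnit_ct hFsq).mul hGsq
    rw [hFG, Matrix.isUnit_submatrix_equiv] at h1
    exact h1
  have hWU : IsUnit (Wᴴ * U) := by
    rw [Matrix.isUnit_iff_isUnit_det, Matrix.det_fromBlocks_zero₁₂] at hFGunit
    rw [Matrix.isUnit_iff_isUnit_det]
    exact isUnit_of_mul_isUnit_right hFGunit
  have hUW : IsUnit (Uᴴ * W) := by
    have := isUnit_ct hWU
    simpa [conjTranspose_mul] using this
  have hproj2 : ptᴴ = W * (Uᴴ * W)⁻¹ * Uᴴ := by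
    set D := ptᴴ - W * (Uᴴ * W)⁻¹ * Uᴴ with hD
    have hKD : Kᴴ * D = 0 := by
      rw [hD, Matrix.mul_sub, hKpt, ← Matrix.mul_assoc, ← Matrix.mul_assoc, hKW,
        Matrix.zero_mul, Matrix.zero_mul, sub_zero]
    have hUD : Uᴴ * D = 0 := by
      rw [hD, Matrix.mul_sub, hUpt, ← Matrix.mul_assoc, ← Matrix.mul_assoc,
        Matrix.mul_nonsing_inv _ ((Matrix.isUnit_iff_isUnit_det _).mp hUW),
        Matrix.one_mul, sub_self]
    have hGD : (fromCols K U)ᴴ * D = 0 := by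
      rw [conjTranspose_fromCols_eq_fromRows_conjTranspose, fromRows_mul, hKD, hUD]
      ext (i | i) j <;> simp
    have hGsqD : Gsqᴴ * D = 0 := by
      have : Gsqᴴ * D = ((fromCols K U)ᴴ * D).submatrix ⇑e.symm id := by
        ext i j
        simp [Gsq, Matrix.mul_apply]
      rw [this, hGD]
      ext i j
      simp
    have hGdet := (Matrix.isUnit_iff_isUnit_det _).mp (isUnit_ct hGsq)
    have hD0 : D = 0 := by
      have h2 := congrArg (fun Z => (Gsqᴴ)⁻¹ * Z) hGsqD
      simpa [← Matrix.mul_assoc, Matrix.nonsing_inv_mul _ hGdet] using h2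
    exact sub_eq_zero.mp hD0
  -- Step 4 : M = Q (R J Rᴴ) Qᴴ
  have hTU : T * Uᴴ = Ups * ptᴴ := by
    rw [hT, hproj2]
    simp only [Matrix.mul_assoc]
  have hUT : U * Tᴴ = pt * Upsᴴ := by
    have := congrArg conjTranspose hTU
    simpa only [conjTranspose_mul, conjTranspose_conjTranspose, Matrix.mul_assoc] using this
  have hMQ : M = Q * (R * Matrix.fromBlocks 0 1 1 0 * Rᴴ) * Qᴴ := by
    have h1 : fromCols U T * (Matrix.fromBlocks 0 1 1 0 : Matrix (Fin p ⊕ Fin p) (Fin p ⊕ Fin p) ℂ) * (fromCols U T)ᴴ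
        = T * Uᴴ + U * Tᴴ := by
      rw [fromCols_mul_fromBlocks, conjTranspose_fromCols_eq_fromRows_conjTranspose,
        fromCols_mul_fromRows]
      simp
    rw [hMdecomp, ← hTU, ← hUT, ← h1, hQR]
    simp only [conjTranspose_mul, Matrix.mul_assoc]
  -- conclude
  rw [hres, hMQ, frob_unitary_conj V hV, frob_unitary_conj Q hQ]
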